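/- arXiv:1811.07409 — 2 statements merged into one kernel-verified Lean document; each statement's English description precedes it below -/
import Mathlib

section
/- Suppose F ∈ ℂ^{ν×ν}, G ∈ ℂ^{ν×m}, S ∈ ℂ^{ν×ν}, L ∈ ℂ^{m×ν} with σ(F) ∩ σ(S) = ∅, and let P be the unique invertible solution of FP + GL = PS. If Π solves AΠ + BL = ΠS with σ(A)∩σ(S)=∅, and HP = CΠ, then for every eigenvalue s_i of S with eigenvector w (S w = s_i w) such that s_i ∉ σ(A) ∪ σ(F), the tangential interpolation condition C(s_iI−A)⁻¹B·(Lw) = H(s_iI−F)⁻¹G·(Lw) holds. -/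
open Matrix

lemma aux_key {n ν m : ℕ} (A : Matrix (Fin n) (Fin n) ℂ)
    (B : Matrix (Fin n) (Fin m) ℂ) (S : Matrix (Fin ν) (Fin ν) ℂ)
    (L : Matrix (Fin m) (Fin ν) ℂ) (X : Matrix (Fin n) (Fin ν) ℂ)
    (hPi : A * X + B * L = X * S) (s : ℂ) (w : Fin ν → ℂ)
    (hw : S *ᵥ w = s • w)
    (hU : IsUnit (s • (1 : Matrix (Fin n) (Fin n) ℂ) - A)) :
    (s • (1 : Matrix (Fin n) (Fin n) ℂ) - A)⁻¹ *ᵥ (B *ᵥ (L *ᵥ w)) = X *ᵥ w := by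
  set M := s • (1 : Matrix (Fin n) (Fin n) ℂ) - A with hM
  have hAX : (A * X) *ᵥ w = s • (X *ᵥ w) - (B * L) *ᵥ w := by
    have : (A * X) *ᵥ w = (X * S) *ᵥ w - (B * L) *ᵥ w := by
      rw [← hPi]; simp [Matrix.add_mulVec]
    rw [this, ← Matrix.mulVec_mulVec, hw, Matrix.mulVec_smul]
  have key : M *ᵥ (X *ᵥ w) = B *ᵥ (L *ᵥ w) := by
    rw [hM, Matrix.sub_mulVec, Matrix.mulVec_mulVec, Matrix.mulVec_mulVec, hAX,
      Matrix.mulVec_mulVec]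
    simp [Matrix.smul_mulVec]
  rw [← key, Matrix.mulVec_mulVec,
    Matrix.nonsing_inv_mul _ ((Matrix.isUnit_iff_isUnit_det M).mp hU), Matrix.one_mulVec]

/-- Tangential interpolation from moment matching: if `HP = CΠ` with `Π`, `P`
solving the corresponding Sylvester equations, then for any eigenvalue `s` of
`S` with eigenvector `w` (with `s ∉ σ(A) ∪ σ(F)`), the tangential interpolation
condition `C(sI−A)⁻¹B(Lw) = H(sI−F)⁻¹G(Lw)` holds. -/
theorem tangential_interpolation {n m p ν : ℕ}
    (A : Matrix (Fin n) (Fin n) ℂ) (B : Matrix (Fin n) (Fin m) ℂ)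
    (C : Matrix (Fin p) (Fin n) ℂ)
    (F : Matrix (Fin ν) (Fin ν) ℂ) (G : Matrix (Fin ν) (Fin m) ℂ)
    (H : Matrix (Fin p) (Fin ν) ℂ)
    (S : Matrix (Fin ν) (Fin ν) ℂ) (L : Matrix (Fin m) (Fin ν) ℂ)
    (P Pi : Matrix (Fin ν) (Fin ν) ℂ)
    (PiFull : Matrix (Fin n) (Fin ν) ℂ)
    (hFS : spectrum ℂ F ∩ spectrum ℂ S = ∅)
    (hAS : spectrum ℂ A ∩ spectrum ℂ S = ∅)
    (hPdet : IsUnit P.det)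
    (hP : F * P + G * L = P * S)
    (hPi : A * PiFull + B * L = PiFull * S)
    (hMM : H * P = C * PiFull)
    (s : ℂ) (w : Fin ν → ℂ)
    (hw : S *ᵥ w = s • w)
    (hs : s ∉ spectrum ℂ A ∪ spectrum ℂ F) :
    (C * (s • (1 : Matrix (Fin n) (Fin n) ℂ) - A)⁻¹ * B) *ᵥ (L *ᵥ w) =
      (H * (s • (1 : Matrix (Fin ν) (Fin ν) ℂ) - F)⁻¹ * G) *ᵥ (L *ᵥ w) := by
  have hsA : s ∉ spectrum ℂ A := fun h => hs (Set.mem_union_left _ h)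
  have hsF : s ∉ spectrum ℂ F := fun h => hs (Set.mem_union_right _ h)
  have hUA : IsUnit (s • (1 : Matrix (Fin n) (Fin n) ℂ) - A) := by
    have := spectrum.notMem_iff.mp hsA
    rwa [Algebra.algebraMap_eq_smul_one] at this
  have hUF : IsUnit (s • (1 : Matrix (Fin ν) (Fin ν) ℂ) - F) := by
    have := spectrum.notMem_iff.mp hsF
    rwa [Algebra.algebraMap_eq_smul_one] at this
  have h1 := aux_key A B S L PiFull hPi s w hw hUA
  have h2 := aux_key F G S L P hP s w hw hUF
  calc (C * (s • (1 : Matrix (Fin n) (Fin n) ℂ) - A)⁻¹ * B) *ᵥ (L *ᵥ w)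
      = C *ᵥ ((s • (1 : Matrix (Fin n) (Fin n) ℂ) - A)⁻¹ *ᵥ (B *ᵥ (L *ᵥ w))) := by
        simp [Matrix.mulVec_mulVec, Matrix.mul_assoc]
    _ = C *ᵥ (PiFull *ᵥ w) := by rw [h1]
    _ = (C * PiFull) *ᵥ w := by rw [Matrix.mulVec_mulVec]
    _ = (H * P) *ᵥ w := by rw [hMM]
    _ = H *ᵥ (P *ᵥ w) := by rw [Matrix.mulVec_mulVec]
    _ = H *ᵥ ((s • (1 : Matrix (Fin ν) (Fin ν) ℂ) - F)⁻¹ *ᵥ (G *ᵥ (L *ᵥ w))) := by rw [h2]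
    _ = (H * (s • (1 : Matrix (Fin ν) (Fin ν) ℂ) - F)⁻¹ * G) *ᵥ (L *ᵥ w) := by
        simp [Matrix.mulVec_mulVec, Matrix.mul_assoc]
end

section
/- Let 𝒜 be a stable matrix, let ℳ solve 𝒜ᵀℳ + ℳ𝒜 + 𝒞 = 0 and 𝒲 solve 𝒜𝒲 + 𝒲𝒜ᵀ + ℬ = 0, and let d𝒜, dℬ, d𝒞 be perturbation matrices with d𝒞 symmetric. If dℳ solves 𝒜ᵀ(dℳ) + (dℳ)𝒜 + (d𝒜)ᵀℳ + ℳ(d𝒜) = 0, then trace((dℳ)·ℬ) = trace(𝒲((d𝒜)ᵀℳ + ℳ(d𝒜))) = 2·trace(ℳ (d𝒜) 𝒲). -/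
open Matrix Polynomial

lemma eval_charpoly_aux {N : ℕ} (A : Matrix (Fin N) (Fin N) ℂ) (μ : ℂ)
    (h : (Matrix.charpoly A).eval μ = 0) : μ ∈ spectrum ℂ A := by
  rw [spectrum.mem_iff]
  have hdet : ((charmatrix A).map (evalRingHom μ)).det = 0 := by
    rw [← RingHom.mapMatrix_apply, ← RingHom.map_det]; simpa [Matrix.charpoly] using h
  have hmat : (charmatrix A).map (evalRingHom μ) = (algebraMap ℂ _ μ) - A := by
    ext i j
    by_cases hij : i = j
    · subst hij; simp [charmatrix_apply_eq, Matrix.algebraMap_matrix_apply]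
    · simp [charmatrix_apply_ne _ _ _ hij, Matrix.algebraMap_matrix_apply, hij]
  rw [hmat] at hdet
  intro hu
  have := (Matrix.isUnit_iff_isUnit_det _).mp hu
  rw [hdet] at this
  exact (not_isUnit_zero this)

lemma spectrum_transpose_eq {N : ℕ} (A : Matrix (Fin N) (Fin N) ℂ) :
    spectrum ℂ Aᵀ = spectrum ℂ A := by
  ext μ
  rw [spectrum.mem_iff, spectrum.mem_iff]
  have : (algebraMap ℂ (Matrix (Fin N) (Fin N) ℂ) μ) - Aᵀ =
      ((algebraMap ℂ (Matrix (Fin N) (Fin N) ℂ) μ) - A)ᵀ := by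
    rw [Matrix.transpose_sub]
    congr 1
    ext i j
    by_cases hij : i = j <;> simp [Matrix.algebraMap_matrix_apply, hij, eq_comm]
  rw [this, Matrix.isUnit_transpose]

lemma mem_spectrum_neg {N : ℕ} (A : Matrix (Fin N) (Fin N) ℂ) (μ : ℂ)
    (h : μ ∈ spectrum ℂ (-A)) : -μ ∈ spectrum ℂ A := by
  rw [spectrum.mem_iff] at h ⊢
  intro hu
  apply h
  have : (algebraMap ℂ (Matrix (Fin N) (Fin N) ℂ) μ) - (-A) =
      -((algebraMap ℂ (Matrix (Fin N) (Fin N) ℂ) (-μ)) - A) := by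
    simp [map_neg]; abel
  rw [this]
  exact hu.neg

/-- Uniqueness of Lyapunov solutions: kernel is trivial when `A` is stable. -/
lemma lyap_ker {N : ℕ} (A X : Matrix (Fin N) (Fin N) ℂ)
    (hA : ∀ μ ∈ spectrum ℂ A, μ.re < 0)
    (h : Aᵀ * X + X * A = 0) : X = 0 := by
  rcases Nat.eq_zero_or_pos N with hN | hN
  · subst hN
    ext i j; exact absurd i.2 (by simp)
  have hXA : X * A = (-Aᵀ) * X := by
    have := eq_neg_of_add_eq_zero_right h
    rw [this, neg_mul]
  have hpow : ∀ n : ℕ, X * A ^ n = (-Aᵀ) ^ n * X := by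
    intro n
    induction n with
    | zero => simp
    | succ n ih =>
      rw [pow_succ, pow_succ, ← mul_assoc, ih, mul_assoc, hXA, ← mul_assoc]
  have haeval : ∀ p : ℂ[X], X * (aeval A p) = (aeval (-Aᵀ) p) * X := by
    intro p
    induction p using Polynomial.induction_on' with
    | add p q hp hq => rw [map_add, map_add, mul_add, add_mul, hp, hq]
    | monomial n a =>
      rw [aeval_monomial, aeval_monomial]
      calc X * ((algebraMap ℂ (Matrix (Fin N) (Fin N) ℂ)) a * A ^ n)
          = (algebraMap ℂ (Matrix (Fin N) (Fin N) ℂ)) a * (X * A ^ n) := by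
            rw [← mul_assoc, ← Algebra.commutes a X, mul_assoc]
        _ = (algebraMap ℂ (Matrix (Fin N) (Fin N) ℂ)) a * (-Aᵀ) ^ n * X := by
            rw [hpow, mul_assoc]
  have hkey := haeval (Matrix.charpoly A)
  rw [Matrix.aeval_self_charpoly, mul_zero] at hkey
  -- show the operator `aeval (-Aᵀ) charpoly A` is a unit
  have hdeg : 0 < (Matrix.charpoly A).degree := by
    rw [Matrix.charpoly_degree_eq_dim]
    simpa using hN
  have hspec := spectrum.map_polynomial_aeval_of_degree_pos (𝕜 := ℂ)
    (-Aᵀ) (Matrix.charpoly A) hdeg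
  have hunit : IsUnit (aeval (-Aᵀ) (Matrix.charpoly A)) := by
    rw [← spectrum.zero_notMem_iff ℂ, hspec]
    rintro ⟨μ, hμ, hev⟩
    have h1 : -μ ∈ spectrum ℂ A := by
      rw [← spectrum_transpose_eq]; exact mem_spectrum_neg _ _ hμ
    have h2 : μ ∈ spectrum ℂ A := eval_charpoly_aux A μ hev
    have := hA _ h1
    have := hA _ h2
    simp only [Complex.neg_re] at *
    linarith
  obtain ⟨u, hu⟩ := hunit
  have huX : (↑u : Matrix (Fin N) (Fin N) ℂ) * X = 0 := by rw [hu]; exact hkey.symm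
  have h0 : (↑u⁻¹ : Matrix (Fin N) (Fin N) ℂ) * ((↑u : Matrix (Fin N) (Fin N) ℂ) * X) = 0 := by
    rw [huX, mul_zero]
  rwa [← mul_assoc, Units.inv_mul, one_mul] at h0

/-- Real version: if `Aᵀ X + X A = 0` over ℝ and the complexification of `A` is
stable, then `X = 0`. -/
lemma lyap_ker_real {N : ℕ} (A X : Matrix (Fin N) (Fin N) ℝ)
    (hA : ∀ μ ∈ spectrum ℂ (A.map (Complex.ofReal)), μ.re < 0)
    (h : Aᵀ * X + X * A = 0) : X = 0 := by
  have hmap : (A.map (Complex.ofReal))ᵀ * (X.map (Complex.ofReal)) +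
      (X.map (Complex.ofReal)) * (A.map (Complex.ofReal)) = 0 := by
    have := congrArg (fun M => M.map (Complex.ofRealHom : ℝ →+* ℂ)) h
    simp [Matrix.map_add, Matrix.map_mul, Matrix.transpose_map] at this
    exact this
  have := lyap_ker _ _ hA hmap
  ext i j
  have := congrFun (congrFun this i) j
  simpa using this

/-- Directional-derivative trace identity for the H₂ cost:
`trace(dM·B) = trace(W(dAᵀM + M dA)) = 2 trace(M dA W)`. -/
theorem h2_directional_derivative_trace {N : ℕ}
    (𝒜 M W B C dA dB dC dM : Matrix (Fin N) (Fin N) ℝ)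
    (h𝒜 : ∀ μ ∈ spectrum ℂ (𝒜.map (Complex.ofReal)), μ.re < 0)
    (hBsymm : Bᵀ = B) (hCsymm : Cᵀ = C) (hdCsymm : dCᵀ = dC)
    (hM : 𝒜ᵀ * M + M * 𝒜 + C = 0)
    (hW : 𝒜 * W + W * 𝒜ᵀ + B = 0)
    (hdM : 𝒜ᵀ * dM + dM * 𝒜 + dAᵀ * M + M * dA = 0) :
    (dM * B).trace = (W * (dAᵀ * M + M * dA)).trace ∧
    (W * (dAᵀ * M + M * dA)).trace = 2 * (M * dA * W).trace := by
  -- Symmetry of M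
  have hMsymm : Mᵀ = M := by
    have hMt : 𝒜ᵀ * Mᵀ + Mᵀ * 𝒜 + C = 0 := by
      have := congrArg Matrix.transpose hM
      simpa [Matrix.transpose_add, Matrix.transpose_mul, hCsymm, add_comm,
        add_left_comm] using this
    have hker : 𝒜ᵀ * (Mᵀ - M) + (Mᵀ - M) * 𝒜 = 0 := by
      linear_combination (norm := noncomm_ring) hMt - hM
    have := lyap_ker_real 𝒜 (Mᵀ - M) h𝒜 hker
    have := sub_eq_zero.mp this
    exact this
  -- Symmetry of W
  have hWsymm : Wᵀ = W := by
    have hWt : 𝒜 * Wᵀ + Wᵀ * 𝒜ᵀ + B = 0 := by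
      have := congrArg Matrix.transpose hW
      simpa [Matrix.transpose_add, Matrix.transpose_mul, hBsymm, add_comm,
        add_left_comm] using this
    have hker : (𝒜ᵀ)ᵀ * (Wᵀ - W) + (Wᵀ - W) * 𝒜ᵀ = 0 := by
      rw [Matrix.transpose_transpose]
      linear_combination (norm := noncomm_ring) hWt - hW
    have hspec : ∀ μ ∈ spectrum ℂ ((𝒜ᵀ).map (Complex.ofReal)), μ.re < 0 := by
      intro μ hμ
      apply h𝒜
      rwa [Matrix.transpose_map, spectrum_transpose_eq] at hμ
    have := lyap_ker_real 𝒜ᵀ (Wᵀ - W) hspec hker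
    exact sub_eq_zero.mp this
  have hB : B = -(𝒜 * W + W * 𝒜ᵀ) := eq_neg_of_add_eq_zero_right hW
  have hgroup : (𝒜ᵀ * dM + dM * 𝒜) + (dAᵀ * M + M * dA) = 0 := by
    rw [← add_assoc]; exact hdM
  have hdAM : dAᵀ * M + M * dA = -(𝒜ᵀ * dM + dM * 𝒜) :=
    eq_neg_of_add_eq_zero_right hgroup
  constructor
  · rw [hB, hdAM]
    rw [mul_neg, mul_neg, Matrix.trace_neg, Matrix.trace_neg]
    congr 1
    rw [mul_add, mul_add, Matrix.trace_add, Matrix.trace_add]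
    have e1 : (dM * (𝒜 * W)).trace = (W * (dM * 𝒜)).trace := by
      rw [Matrix.trace_mul_comm W (dM * 𝒜), mul_assoc]
    have e2 : (dM * (W * 𝒜ᵀ)).trace = (W * (𝒜ᵀ * dM)).trace := by
      rw [Matrix.trace_mul_comm dM (W * 𝒜ᵀ), mul_assoc]
    rw [e1, e2, add_comm]
  · rw [mul_add, Matrix.trace_add]
    have h1 : (W * (dAᵀ * M)).trace = (M * dA * W).trace := by
      rw [← Matrix.trace_transpose (W * (dAᵀ * M))]
      rw [Matrix.transpose_mul, Matrix.transpose_mul, Matrix.transpose_transpose,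
        hMsymm, hWsymm]
    have h2 : (W * (M * dA)).trace = (M * dA * W).trace := by
      rw [Matrix.trace_mul_comm]
    rw [h1, h2]; ring
end
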